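/- If four points a, b, c, d ∈ Im ℍ ≅ ℝ³ are coplanar but not concyclic, then the imaginary part of the cross-ratio, Im cro(a,b,c,d), is orthogonal to their common plane. -/

import Mathlib

noncomputable section
open Quaternion

/-- The quaternionic cross-ratio `cro(a,b,c,d) = (a-b)(b-c)⁻¹(c-d)(d-a)⁻¹`. -/
def qcro (a b c d : Quaternion ℝ) : Quaternion ℝ :=
  (a - b) * (b - c)⁻¹ * (c - d) * (d - a)⁻¹


/-- Points lie on a common circle, or on a common line (degenerate circle). -/
def ConcyclicOrLine (s : Set (Quaternion ℝ)) : Prop :=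
  EuclideanGeometry.Concyclic s ∨ Collinear ℝ s

lemma anticomm_aux (p n : ℍ) (hp : p.re = 0) (hn : n.re = 0) (h : (inner ℝ p n : ℝ) = 0) :
    p * n = -(n * p) := by
  have h' : (p * star n).re = 0 := h
  ext <;> simp_all [Quaternion.re_mul, Quaternion.imI_mul, Quaternion.imJ_mul, Quaternion.imK_mul,
    Quaternion.re_star, Quaternion.imI_star, Quaternion.imJ_star, Quaternion.imK_star] <;>
    ring_nf <;> linarith

lemma anticomm_inv (x n : ℍ) (h : x * n = -(n * x)) : x⁻¹ * n = -(n * x⁻¹) := by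
  rcases eq_or_ne x 0 with rfl | hx
  · simp
  · apply mul_left_cancel₀ hx
    have : x * (x⁻¹ * n) = n := by rw [← mul_assoc, mul_inv_cancel₀ hx, one_mul]
    rw [this, mul_neg, ← mul_assoc, h, neg_mul, neg_neg, mul_assoc, mul_inv_cancel₀ hx, mul_one]

lemma re_eq_zero_of_anticomm (q n : ℍ) (hn : n.re = 0) (hn0 : n ≠ 0) (h : q * n = -(n * q)) :
    q.re = 0 := by
  have h1 : (q * n).imI = (-(n * q)).imI := by rw [h]
  have h2 : (q * n).imJ = (-(n * q)).imJ := by rw [h]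
  have h3 : (q * n).imK = (-(n * q)).imK := by rw [h]
  simp only [Quaternion.imI_mul, Quaternion.imJ_mul, Quaternion.imK_mul, Quaternion.imI_neg,
    Quaternion.imJ_neg, Quaternion.imK_neg, hn] at h1 h2 h3
  have hI : q.re * n.imI = 0 := by linarith
  have hJ : q.re * n.imJ = 0 := by linarith
  have hK : q.re * n.imK = 0 := by linarith
  by_contra hq
  apply hn0
  ext <;> simp_all [mul_eq_zero]

lemma anticomm_mul (x y n : ℍ) (hx : x * n = -(n * x)) (hy : y * n = -(n * y)) :
    (x * y) * n = n * (x * y) := by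
  calc (x * y) * n = x * (y * n) := by rw [mul_assoc]
    _ = -((x * n) * y) := by rw [hy, mul_neg, mul_assoc]
    _ = (n * x) * y := by rw [hx, neg_mul, neg_neg]
    _ = n * (x * y) := by rw [mul_assoc]

lemma anticomm_comm_mul (c x n : ℍ) (hc : c * n = n * c) (hx : x * n = -(n * x)) :
    (c * x) * n = -(n * (c * x)) := by
  calc (c * x) * n = c * (x * n) := by rw [mul_assoc]
    _ = -((c * n) * x) := by rw [hx, mul_neg, mul_assoc]
    _ = -(n * (c * x)) := by rw [hc, mul_assoc]

lemma anticomm4 (p q r s n : ℍ) (hp : p * n = -(n * p)) (hq : q * n = -(n * q))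
    (hr : r * n = -(n * r)) (hs : s * n = -(n * s)) :
    (p * q * r * s) * n = n * (p * q * r * s) := by
  have c12 : Commute n (p * q) := (anticomm_mul p q n hp hq).symm
  have c34 : Commute n (r * s) := (anticomm_mul r s n hr hs).symm
  have h := (c12.mul_right c34).eq
  rw [show p * q * r * s = (p * q) * (r * s) from by rw [mul_assoc]]
  exact h.symm

lemma inner_im_eq (q v : ℍ) (hv : v.re = 0) : (inner ℝ q.im v : ℝ) = -((q * v).re) := by
  rw [Quaternion.inner_def]
  simp [Quaternion.re_mul, hv]
  ring

/-- If four purely imaginary quaternions are coplanar but not concyclic, then the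
imaginary part of their cross-ratio is orthogonal to their common plane (i.e. to all
direction vectors of that plane). -/
theorem im_cro_orthogonal_to_plane (a b c d : Quaternion ℝ)
    (ha : a.re = 0) (hb : b.re = 0) (hc : c.re = 0) (hd : d.re = 0)
    (hab : a ≠ b) (hac : a ≠ c) (had : a ≠ d)
    (hbc : b ≠ c) (hbd : b ≠ d) (hcd : c ≠ d)
    (hcop : Coplanar ℝ ({a, b, c, d} : Set (Quaternion ℝ)))
    (hnc : ¬ ConcyclicOrLine {a, b, c, d}) :
    (inner ℝ ((qcro a b c d).im) (b - a) : ℝ) = 0 ∧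
      (inner ℝ ((qcro a b c d).im) (c - a) : ℝ) = 0 ∧
      (inner ℝ ((qcro a b c d).im) (d - a) : ℝ) = 0 := by
  -- the span of the plane directions together with 1 has dim ≤ 3
  set D : Set ℍ := {b - a, c - a, d - a} with hD
  have hsub : Submodule.span ℝ D ≤ vectorSpan ℝ ({a, b, c, d} : Set ℍ) := by
    rw [Submodule.span_le]
    rintro x (rfl | rfl | rfl) <;>
      exact vsub_mem_vectorSpan ℝ (by simp) (by simp)
  have hDfr : Module.finrank ℝ (Submodule.span ℝ D) ≤ 2 :=
    le_trans (Submodule.finrank_mono hsub) hcop.finrank_le_two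
  set V : Submodule ℝ ℍ := Submodule.span ℝ (insert 1 D) with hV
  have hVfr : Module.finrank ℝ V ≤ 3 := by
    rw [hV, Submodule.span_insert]
    have h1 : Module.finrank ℝ (Submodule.span ℝ ({1} : Set ℍ)) ≤ 1 := by
      exact le_of_eq (finrank_span_singleton (one_ne_zero (α := ℍ)))
    have := Submodule.finrank_sup_add_finrank_inf_eq (Submodule.span ℝ ({1} : Set ℍ))
      (Submodule.span ℝ D)
    omega
  have hfr4 : Module.finrank ℝ ℍ = 4 := Quaternion.finrank_eq_four (R := ℝ)
  have horth : 0 < Module.finrank ℝ Vᗮ := by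
    have := V.finrank_add_finrank_orthogonal
    omega
  obtain ⟨⟨n, hnV⟩, hn0'⟩ := Module.finrank_pos_iff_exists_ne_zero.mp horth
  have hn0 : n ≠ 0 := fun h => hn0' (by simpa [Submodule.mk_eq_zero] using h)
  have hperp : ∀ v ∈ V, (inner ℝ v n : ℝ) = 0 :=
    fun v hv => (Submodule.mem_orthogonal V n).mp hnV v hv
  have h1V : (1 : ℍ) ∈ V := Submodule.subset_span (Set.mem_insert _ _)
  have hnre : n.re = 0 := by
    have := hperp 1 h1V
    rw [Quaternion.inner_def] at this
    simpa using this
  have hmemD : ∀ x ∈ D, x ∈ V := fun x hx =>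
    Submodule.subset_span (Set.mem_insert_of_mem _ hx)
  have hba : b - a ∈ V := hmemD _ (by simp [hD])
  have hca : c - a ∈ V := hmemD _ (by simp [hD])
  have hda : d - a ∈ V := hmemD _ (by simp [hD])
  -- anticommutation of all relevant difference vectors with n
  have hanti : ∀ v : ℍ, v ∈ V → v.re = 0 → v * n = -(n * v) := fun v hv hvre =>
    anticomm_aux v n hvre hnre (hperp v hv)
  have hA_ab : (a - b) * n = -(n * (a - b)) := by
    have : a - b = -(b - a) := by abel
    rw [this]
    have := hanti (b - a) hba (by simp [ha, hb])
    rw [neg_mul, this, mul_neg, neg_neg]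
  have hA_bc : (b - c) * n = -(n * (b - c)) := by
    have h' : b - c = (b - a) - (c - a) := by abel
    rw [h']
    exact hanti _ (Submodule.sub_mem V hba hca) (by simp [hb, hc])
  have hA_cd : (c - d) * n = -(n * (c - d)) := by
    have h' : c - d = (c - a) - (d - a) := by abel
    rw [h']
    exact hanti _ (Submodule.sub_mem V hca hda) (by simp [hc, hd])
  have hA_da : (d - a) * n = -(n * (d - a)) := by
    exact hanti _ hda (by simp [hd, ha])
  have hA2 : (b - c)⁻¹ * n = -(n * (b - c)⁻¹) := anticomm_inv _ _ hA_bc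
  have hA4 : (d - a)⁻¹ * n = -(n * (d - a)⁻¹) := anticomm_inv _ _ hA_da
  have hC : (qcro a b c d) * n = n * (qcro a b c d) :=
    anticomm4 _ _ _ _ _ hA_ab hA2 hA_cd hA4
  have key : ∀ v : ℍ, v ∈ V → v.re = 0 → (inner ℝ ((qcro a b c d).im) v : ℝ) = 0 := by
    intro v hv hvre
    have hAv := hanti v hv hvre
    have hQ : (qcro a b c d * v) * n = -(n * (qcro a b c d * v)) :=
      anticomm_comm_mul _ _ _ hC hAv
    have := re_eq_zero_of_anticomm _ n hnre hn0 hQ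
    rw [inner_im_eq _ _ hvre, this, neg_zero]
  exact ⟨key _ hba (by simp [ha, hb]), key _ hca (by simp [ha, hc]), key _ hda (by simp [ha, hd])⟩
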